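/- Let Q : [0,∞)×ℝ → [0,∞) be continuously differentiable in its first argument and satisfy f·∂_f Q(f,P) ≤ 3 Q(f,P) for all f ≥ 0 and P ∈ ℝ. Let f₀ be a nonnegative function in L¹(ℝ⁶) with ∫∫ f₀ dv dx = M > 0, finite kinetic energy, finite Casimir integral and finite Coulomb energy, satisfying the virial relation 2 E_kin(f₀) + E_pot(f₀) = 0. Define U₀(x) := −∫ ρ_{f₀}(y)/|x−y| dy, E(x,v) := ½|v|² + U₀(x), and E₀ := (1/M) ∫∫ [E + ∂_f Q(f₀,P)] f₀ dv dx. Then E₀ = (1/M)[ E_kin(f₀) + 2 E_pot(f₀) + ∫∫ f₀ ∂_f Q(f₀,P) dv dx ] and E₀ ≤ 3 ℋ_C(f₀)/M. In particular, if ℋ_C(f₀) < 0 then E₀ < 0. -/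
import Mathlib


open MeasureTheory Real Filter Topology

noncomputable section

abbrev E3 := EuclideanSpace ℝ (Fin 3)

def e3 (a b c : ℝ) : E3 := (WithLp.equiv 2 (Fin 3 → ℝ)).symm ![a, b, c]

/-- third component of the angular momentum, P(x,v) = x₁v₂ − x₂v₁ -/
def angmom (z : E3 × E3) : ℝ := z.1 0 * z.2 1 - z.1 1 * z.2 0

/-- induced spatial density ρ_f -/
def rho (f : E3 × E3 → ℝ) (x : E3) : ℝ := ∫ v : E3, f (x, v)

/-- kinetic energy -/
def Ekin (f : E3 × E3 → ℝ) : ℝ := (1/2) * ∫ z : E3 × E3, ‖z.2‖^2 * f z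

/-- potential energy -/
def Epot (f : E3 × E3 → ℝ) : ℝ :=
  -(1/2) * ∫ x : E3, ∫ y : E3, rho f x * rho f y / ‖x - y‖

/-- Casimir functional 𝒞 -/
def Casimir (Q : ℝ → ℝ → ℝ) (f : E3 × E3 → ℝ) : ℝ :=
  ∫ z : E3 × E3, Q (f z) (angmom z)

/-- energy-Casimir functional ℋ_C -/
def HC (Q : ℝ → ℝ → ℝ) (f : E3 × E3 → ℝ) : ℝ := Ekin f + Epot f + Casimir Q f

/-- rotation about the x₃-axis by angle θ -/
def rotZ (θ : ℝ) (x : E3) : E3 :=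
  e3 (Real.cos θ * x 0 - Real.sin θ * x 1) (Real.sin θ * x 0 + Real.cos θ * x 1) (x 2)

/-- axial symmetry: invariance under all rotations about the x₃-axis -/
def AxiSym (f : E3 × E3 → ℝ) : Prop :=
  ∀ (θ : ℝ) (z : E3 × E3), f (rotZ θ z.1, rotZ θ z.2) = f z

/-- membership in the constraint set ℱ_M -/
def MemFM (Q : ℝ → ℝ → ℝ) (M : ℝ) (f : E3 × E3 → ℝ) : Prop :=
  Integrable f ∧ (∀ z, 0 ≤ f z) ∧ (∫ z : E3 × E3, f z) = M ∧
    Integrable (fun z : E3 × E3 => ‖z.2‖^2 * f z) ∧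
    Integrable (fun z : E3 × E3 => Q (f z) (angmom z))

/-- membership in the axially symmetric constraint set ℱ_M^S -/
def MemFMS (Q : ℝ → ℝ → ℝ) (M : ℝ) (f : E3 × E3 → ℝ) : Prop :=
  MemFM Q M f ∧ AxiSym f

/-- h_M = inf of ℋ_C over ℱ_M -/
def hInf (Q : ℝ → ℝ → ℝ) (M : ℝ) : ℝ := sInf (HC Q '' {f | MemFM Q M f})

/-- h_M^S = inf of ℋ_C over ℱ_M^S -/
def hInfS (Q : ℝ → ℝ → ℝ) (M : ℝ) : ℝ := sInf (HC Q '' {f | MemFMS Q M f})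

/-- induced gravitational potential U₀ of a state f₀ -/
def U0 (f0 : E3 × E3 → ℝ) (x : E3) : ℝ := -∫ y : E3, rho f0 y / ‖x - y‖

/-- particle energy E(x,v) = ½|v|² + U₀(x) -/
def Eng (f0 : E3 × E3 → ℝ) (z : E3 × E3) : ℝ := (1/2) * ‖z.2‖^2 + U0 f0 z.1

/-- φ(s,P) = (∂_f Q(·,P))⁻¹(s) for s ≥ 0, and 0 for s < 0 -/
def phi (Qf : ℝ → ℝ → ℝ) (s P : ℝ) : ℝ :=
  if 0 ≤ s then Function.invFunOn (fun t => Qf t P) (Set.Ici 0) s else 0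

/-- If f ∂_f Q(f,P) ≤ 3 Q(f,P) and f₀ satisfies the virial relation
2E_kin + E_pot = 0, then E₀ = (1/M)[E_kin + 2E_pot + ∫∫ f₀ ∂_f Q(f₀,P)] and
E₀ ≤ 3ℋ_C(f₀)/M; in particular E₀ < 0 whenever ℋ_C(f₀) < 0. -/
theorem stmt18 (Q Qf' : ℝ → ℝ → ℝ)
    (hQnonneg : ∀ s P : ℝ, 0 ≤ s → 0 ≤ Q s P)
    (hQderiv : ∀ s P : ℝ, 0 ≤ s → HasDerivWithinAt (fun t => Q t P) (Qf' s P) (Set.Ici 0) s)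
    (hQfcont : ContinuousOn (fun p : ℝ × ℝ => Qf' p.1 p.2) (Set.Ici (0:ℝ) ×ˢ (Set.univ : Set ℝ)))
    (h3Q : ∀ s P : ℝ, 0 ≤ s → s * Qf' s P ≤ 3 * Q s P)
    (M : ℝ) (hMpos : 0 < M) (f0 : E3 × E3 → ℝ)
    (hf0 : Integrable f0) (hnn : ∀ z, 0 ≤ f0 z)
    (hmass : (∫ z : E3 × E3, f0 z) = M)
    (hkin : Integrable (fun z : E3 × E3 => ‖z.2‖^2 * f0 z))
    (hcas : Integrable (fun z : E3 × E3 => Q (f0 z) (angmom z)))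
    (hcoul : Integrable (fun p : E3 × E3 => rho f0 p.1 * rho f0 p.2 / ‖p.1 - p.2‖))
    (hQff0 : Integrable (fun z : E3 × E3 => Qf' (f0 z) (angmom z) * f0 z))
    (hEf0 : Integrable (fun z : E3 × E3 => Eng f0 z * f0 z))
    (hvirial : 2 * Ekin f0 + Epot f0 = 0) :
    (1/M) * (∫ z : E3 × E3, (Eng f0 z + Qf' (f0 z) (angmom z)) * f0 z) =
      (1/M) * (Ekin f0 + 2 * Epot f0 +
        ∫ z : E3 × E3, Qf' (f0 z) (angmom z) * f0 z) ∧
    (1/M) * (∫ z : E3 × E3, (Eng f0 z + Qf' (f0 z) (angmom z)) * f0 z) ≤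
      3 * HC Q f0 / M ∧
    (HC Q f0 < 0 →
      (1/M) * (∫ z : E3 × E3, (Eng f0 z + Qf' (f0 z) (angmom z)) * f0 z) < 0) := by
  have hU0int : Integrable (fun z : E3 × E3 => U0 f0 z.1 * f0 z) := by
    have heq : (fun z : E3 × E3 => U0 f0 z.1 * f0 z)
        = fun z => Eng f0 z * f0 z - (1/2) * (‖z.2‖^2 * f0 z) := by
      funext z; simp only [Eng]; ring
    rw [heq]; exact hEf0.sub (hkin.const_mul _)
  have hEngsplit : (∫ z : E3 × E3, Eng f0 z * f0 z)
      = Ekin f0 + ∫ z : E3 × E3, U0 f0 z.1 * f0 z := by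
    have heq : (fun z : E3 × E3 => Eng f0 z * f0 z)
        = fun z => (1/2) * (‖z.2‖^2 * f0 z) + U0 f0 z.1 * f0 z := by
      funext z; simp only [Eng]; ring
    rw [heq, integral_add (hkin.const_mul _) hU0int, integral_const_mul, Ekin]
  have hUrho : (∫ z : E3 × E3, U0 f0 z.1 * f0 z) = 2 * Epot f0 := by
    have h1 : (∫ z : E3 × E3, U0 f0 z.1 * f0 z)
        = ∫ x : E3, ∫ v : E3, U0 f0 x * f0 (x, v) := by
      exact MeasureTheory.integral_prod _ (Measure.volume_eq_prod E3 E3 ▸ hU0int)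
    have h2 : (∫ x : E3, ∫ v : E3, U0 f0 x * f0 (x, v))
        = ∫ x : E3, U0 f0 x * rho f0 x := by
      congr 1; funext x; rw [integral_const_mul]; rfl
    have h3 : (∫ x : E3, U0 f0 x * rho f0 x)
        = -∫ x : E3, ∫ y : E3, rho f0 x * rho f0 y / ‖x - y‖ := by
      rw [← integral_neg]
      congr 1; funext x
      have : ∀ y : E3, rho f0 x * rho f0 y / ‖x - y‖
          = (rho f0 y / ‖x - y‖) * rho f0 x := fun y => by ring
      simp only [this]
      rw [integral_mul_const, U0]
      ring
    have h4 : (∫ x : E3, ∫ y : E3, rho f0 x * rho f0 y / ‖x - y‖)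
        = ∫ p : E3 × E3, rho f0 p.1 * rho f0 p.2 / ‖p.1 - p.2‖ := by
      exact MeasureTheory.integral_integral (Measure.volume_eq_prod E3 E3 ▸ hcoul)
    rw [h1, h2, h3, h4, Epot, h4]
    ring
  have hEng : (∫ z : E3 × E3, Eng f0 z * f0 z) = Ekin f0 + 2 * Epot f0 := by
    rw [hEngsplit, hUrho]
  have hsplit : (∫ z : E3 × E3, (Eng f0 z + Qf' (f0 z) (angmom z)) * f0 z)
      = Ekin f0 + 2 * Epot f0 + ∫ z : E3 × E3, Qf' (f0 z) (angmom z) * f0 z := by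
    have heq : (fun z : E3 × E3 => (Eng f0 z + Qf' (f0 z) (angmom z)) * f0 z)
        = fun z => Eng f0 z * f0 z + Qf' (f0 z) (angmom z) * f0 z := by
      funext z; ring
    rw [heq, integral_add hEf0 hQff0, hEng]
  have hImono : (∫ z : E3 × E3, Qf' (f0 z) (angmom z) * f0 z) ≤ 3 * Casimir Q f0 := by
    have : 3 * Casimir Q f0 = ∫ z : E3 × E3, 3 * Q (f0 z) (angmom z) := by
      rw [Casimir, integral_const_mul]
    rw [this]
    refine integral_mono hQff0 (hcas.const_mul 3) fun z => ?_
    have := h3Q (f0 z) (angmom z) (hnn z)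
    linarith [this]
  refine ⟨by rw [hsplit], ?_, ?_⟩
  · rw [hsplit]
    have hHC : HC Q f0 = Ekin f0 + Epot f0 + Casimir Q f0 := rfl
    have hle : Ekin f0 + 2 * Epot f0 + (∫ z : E3 × E3, Qf' (f0 z) (angmom z) * f0 z)
        ≤ 3 * HC Q f0 := by
      rw [hHC]; linarith
    have hrw : 3 * HC Q f0 / M = (1/M) * (3 * HC Q f0) := by ring
    rw [hrw]
    exact mul_le_mul_of_nonneg_left hle (by positivity)
  · intro hneg
    have h1 : (1/M) * (∫ z : E3 × E3, (Eng f0 z + Qf' (f0 z) (angmom z)) * f0 z)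
        ≤ 3 * HC Q f0 / M := by
      rw [hsplit]
      have hHC : HC Q f0 = Ekin f0 + Epot f0 + Casimir Q f0 := rfl
      have hle : Ekin f0 + 2 * Epot f0 + (∫ z : E3 × E3, Qf' (f0 z) (angmom z) * f0 z)
          ≤ 3 * HC Q f0 := by
        rw [hHC]; linarith
      have hrw : 3 * HC Q f0 / M = (1/M) * (3 * HC Q f0) := by ring
      rw [hrw]
      exact mul_le_mul_of_nonneg_left hle (by positivity)
    have h2 : 3 * HC Q f0 / M < 0 := div_neg_of_neg_of_pos (by linarith) hMpos
    linarith
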